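/- Let A₁ ∈ ℝ^{m×k} with rank(A₁) = k, A₂ ∈ ℝ^{m×(n−k)}, and let r ≥ k. Suppose M ∈ ℝ^{m×(n−k)} is any best rank-(r−k) Frobenius approximation of P⊥_{A₁}(A₂), i.e. rank(M) ≤ r−k and ‖P⊥_{A₁}(A₂) − M‖_F ≤ ‖P⊥_{A₁}(A₂) − N‖_F for all N with rank(N) ≤ r−k. Then B̃₂ := P_{A₁}(A₂) + M satisfies rank(A₁ B̃₂) ≤ r and ‖A₂ − B̃₂‖_F ≤ ‖A₂ − B₂‖_F for every B₂ with rank(A₁ B₂) ≤ r. (This is the SVD-free form of the Golub–Hoffman–Stewart theorem: the constrained problem (2) reduces to an unconstrained rank-(r−k) approximation of the projected residual.) -/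

import Mathlib

open Matrix

/-- Frobenius norm of a real matrix. -/
noncomputable def frobNorm {m n : ℕ} (A : Matrix (Fin m) (Fin n) ℝ) : ℝ :=
  Real.sqrt (∑ i, ∑ j, (A i j) ^ 2)

/-- Column space of a matrix, as a subspace of Euclidean space. -/
noncomputable def colSpace {m k : ℕ} (A : Matrix (Fin m) (Fin k) ℝ) :
    Submodule ℝ (EuclideanSpace ℝ (Fin m)) :=
  LinearMap.range (Matrix.toEuclideanLin A)

/-- `P_{A₁}`: orthogonal projection onto the column space of `A₁`, applied columnwise. -/
noncomputable def projCols {m k l : ℕ} (A₁ : Matrix (Fin m) (Fin k) ℝ)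
    (B : Matrix (Fin m) (Fin l) ℝ) : Matrix (Fin m) (Fin l) ℝ :=
  Matrix.of fun i j =>
    ((colSpace A₁).orthogonalProjectionOnto (WithLp.toLp 2 (fun i' => B i' j)) : EuclideanSpace ℝ (Fin m)) i

/-- `P⊥_{A₁}`: orthogonal projection onto the orthogonal complement of the column
space of `A₁`, applied columnwise. -/
noncomputable def projOrthCols {m k l : ℕ} (A₁ : Matrix (Fin m) (Fin k) ℝ)
    (B : Matrix (Fin m) (Fin l) ℝ) : Matrix (Fin m) (Fin l) ℝ :=
  Matrix.of fun i j =>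
    ((colSpace A₁)ᗮ.orthogonalProjectionOnto (WithLp.toLp 2 (fun i' => B i' j)) : EuclideanSpace ℝ (Fin m)) i

namespace GHS

/-- Column space for arbitrary (fintype) column index. -/
noncomputable def colSp {m : ℕ} {n : Type*} [Fintype n] [DecidableEq n]
    (A : Matrix (Fin m) n ℝ) : Submodule ℝ (EuclideanSpace ℝ (Fin m)) :=
  LinearMap.range (Matrix.toEuclideanLin A)

lemma colSpace_eq_colSp {m k : ℕ} (A : Matrix (Fin m) (Fin k) ℝ) :
    colSpace A = colSp A := rfl

/-- projection onto a submodule as a plain linear endomorphism -/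
noncomputable def pl {m : ℕ} (S : Submodule ℝ (EuclideanSpace ℝ (Fin m))) :
    EuclideanSpace ℝ (Fin m) →ₗ[ℝ] EuclideanSpace ℝ (Fin m) :=
  S.subtype ∘ₗ (Submodule.orthogonalProjection S : _ →L[ℝ] S).toLinearMap

lemma pl_apply {m : ℕ} (S : Submodule ℝ (EuclideanSpace ℝ (Fin m))) (x) :
    pl S x = (Submodule.orthogonalProjection S x : EuclideanSpace ℝ (Fin m)) := rfl

/-- column of a matrix as element of Euclidean space -/
noncomputable def colE {m n : ℕ} (X : Matrix (Fin m) (Fin n) ℝ) (j : Fin n) :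
    EuclideanSpace ℝ (Fin m) :=
  (WithLp.equiv 2 (Fin m → ℝ)).symm (fun i => X i j)

lemma colE_apply {m n : ℕ} (X : Matrix (Fin m) (Fin n) ℝ) (j : Fin n) (i : Fin m) :
    colE X j i = X i j := rfl

lemma colE_projCols {m k n : ℕ} (A₁ : Matrix (Fin m) (Fin k) ℝ)
    (X : Matrix (Fin m) (Fin n) ℝ) (j : Fin n) :
    colE (projCols A₁ X) j = pl (colSpace A₁) (colE X j) := rfl

lemma colE_projOrthCols {m k n : ℕ} (A₁ : Matrix (Fin m) (Fin k) ℝ)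
    (X : Matrix (Fin m) (Fin n) ℝ) (j : Fin n) :
    colE (projOrthCols A₁ X) j = pl (colSpace A₁)ᗮ (colE X j) := rfl

lemma toEuclideanLin_single {m n : ℕ} (X : Matrix (Fin m) (Fin n) ℝ) (j : Fin n) :
    Matrix.toEuclideanLin X (EuclideanSpace.single j 1) = colE X j := by
  ext i
  simp [colE, Matrix.toEuclideanLin_apply, Matrix.mulVec_single]

lemma toEuclideanLin_projCols {m k n : ℕ} (A₁ : Matrix (Fin m) (Fin k) ℝ)
    (X : Matrix (Fin m) (Fin n) ℝ) :
    Matrix.toEuclideanLin (projCols A₁ X) = pl (colSpace A₁) ∘ₗ Matrix.toEuclideanLin X := by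
  apply Module.Basis.ext ((EuclideanSpace.basisFun (Fin n) ℝ).toBasis)
  intro j
  simp only [OrthonormalBasis.coe_toBasis, EuclideanSpace.basisFun_apply, LinearMap.comp_apply,
    toEuclideanLin_single]
  exact colE_projCols A₁ X j

lemma toEuclideanLin_projOrthCols {m k n : ℕ} (A₁ : Matrix (Fin m) (Fin k) ℝ)
    (X : Matrix (Fin m) (Fin n) ℝ) :
    Matrix.toEuclideanLin (projOrthCols A₁ X) = pl (colSpace A₁)ᗮ ∘ₗ Matrix.toEuclideanLin X := by
  apply Module.Basis.ext ((EuclideanSpace.basisFun (Fin n) ℝ).toBasis)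
  intro j
  simp only [OrthonormalBasis.coe_toBasis, EuclideanSpace.basisFun_apply, LinearMap.comp_apply,
    toEuclideanLin_single]
  exact colE_projOrthCols A₁ X j

lemma rank_eq_finrank_colSp {m : ℕ} {n : Type*} [Fintype n] [DecidableEq n]
    (A : Matrix (Fin m) n ℝ) :
    A.rank = Module.finrank ℝ (colSp A) := by
  rw [Matrix.rank]
  let e : (Fin m → ℝ) ≃ₗ[ℝ] EuclideanSpace ℝ (Fin m) := (WithLp.linearEquiv 2 ℝ (Fin m → ℝ)).symm
  have h : colSp A = (LinearMap.range A.mulVecLin).map (e : (Fin m → ℝ) →ₗ[ℝ] EuclideanSpace ℝ (Fin m)) := by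
    ext x
    constructor
    · rintro ⟨v, rfl⟩
      exact ⟨A.mulVecLin (WithLp.equiv 2 (n → ℝ) v), ⟨_, rfl⟩, rfl⟩
    · rintro ⟨y, ⟨v, rfl⟩, rfl⟩
      exact ⟨(WithLp.equiv 2 (n → ℝ)).symm v, rfl⟩
  rw [h]; exact (LinearEquiv.finrank_map_eq e _).symm

lemma colSp_fromCols {m k l : ℕ} (A : Matrix (Fin m) (Fin k) ℝ)
    (B : Matrix (Fin m) (Fin l) ℝ) :
    colSp (Matrix.fromCols A B) = colSpace A ⊔ colSpace B := by
  apply le_antisymm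
  · rintro x ⟨v, rfl⟩
    set w : (Fin k ⊕ Fin l) → ℝ := WithLp.equiv 2 _ v with hw
    have hv : v = (WithLp.equiv 2 ((Fin k ⊕ Fin l) → ℝ)).symm
        (Sum.elim (fun j => w (Sum.inl j)) (fun j => w (Sum.inr j))) := by
      apply (WithLp.equiv 2 _).injective
      funext s; cases s <;> rfl
    rw [hv, Matrix.toEuclideanLin_apply_piLp_toLp, WithLp.equiv_symm_apply, WithLp.ofLp_toLp,
      Matrix.fromCols_mulVec_sumElim]
    have : (WithLp.equiv 2 (Fin m → ℝ)).symm
        (A *ᵥ (fun j => w (Sum.inl j)) + B *ᵥ (fun j => w (Sum.inr j)))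
        = (WithLp.equiv 2 (Fin m → ℝ)).symm (A *ᵥ (fun j => w (Sum.inl j)))
          + (WithLp.equiv 2 (Fin m → ℝ)).symm (B *ᵥ (fun j => w (Sum.inr j))) := rfl
    rw [WithLp.equiv_symm_apply] at this
    rw [this]
    exact Submodule.add_mem_sup
      ⟨(WithLp.equiv 2 _).symm (fun j => w (Sum.inl j)),
        Matrix.toEuclideanLin_apply_piLp_toLp _ _⟩
      ⟨(WithLp.equiv 2 _).symm (fun j => w (Sum.inr j)),
        Matrix.toEuclideanLin_apply_piLp_toLp _ _⟩
  · apply sup_le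
    · rintro x ⟨v, rfl⟩
      refine ⟨(WithLp.equiv 2 _).symm (Sum.elim (WithLp.equiv 2 _ v) 0), ?_⟩
      rw [Matrix.toEuclideanLin_apply_piLp_toLp, WithLp.equiv_symm_apply, WithLp.ofLp_toLp, Matrix.fromCols_mulVec_sumElim,
        Matrix.mulVec_zero, add_zero]
      rfl
    · rintro x ⟨v, rfl⟩
      refine ⟨(WithLp.equiv 2 _).symm (Sum.elim 0 (WithLp.equiv 2 _ v)), ?_⟩
      rw [Matrix.toEuclideanLin_apply_piLp_toLp, WithLp.equiv_symm_apply, WithLp.ofLp_toLp, Matrix.fromCols_mulVec_sumElim,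
        Matrix.mulVec_zero, zero_add]
      rfl

end GHS

namespace GHS

noncomputable def frobSq {m n : ℕ} (A : Matrix (Fin m) (Fin n) ℝ) : ℝ :=
  ∑ i, ∑ j, (A i j) ^ 2

lemma frobSq_nonneg {m n : ℕ} (A : Matrix (Fin m) (Fin n) ℝ) : 0 ≤ frobSq A :=
  Finset.sum_nonneg fun _ _ => Finset.sum_nonneg fun _ _ => sq_nonneg _

lemma frobNorm_eq {m n : ℕ} (A : Matrix (Fin m) (Fin n) ℝ) :
    frobNorm A = Real.sqrt (frobSq A) := rfl

lemma frobNorm_le_iff {m n : ℕ} (A B : Matrix (Fin m) (Fin n) ℝ) :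
    frobNorm A ≤ frobNorm B ↔ frobSq A ≤ frobSq B := by
  rw [frobNorm_eq, frobNorm_eq, Real.sqrt_le_sqrt_iff (frobSq_nonneg B)]

lemma frobSq_eq_sum_colE {m n : ℕ} (X : Matrix (Fin m) (Fin n) ℝ) :
    frobSq X = ∑ j, ‖colE X j‖ ^ 2 := by
  rw [frobSq, Finset.sum_comm]
  refine Finset.sum_congr rfl fun j _ => ?_
  rw [EuclideanSpace.norm_eq, Real.sq_sqrt (Finset.sum_nonneg fun _ _ => sq_nonneg _)]
  refine (Finset.sum_congr rfl fun i _ => ?_).symm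
  rw [colE_apply, Real.norm_eq_abs, sq_abs]

lemma matrix_decomp {m k n : ℕ} (A₁ : Matrix (Fin m) (Fin k) ℝ)
    (X : Matrix (Fin m) (Fin n) ℝ) :
    X = projCols A₁ X + projOrthCols A₁ X := by
  ext i j
  have h := Submodule.starProjection_add_starProjection_orthogonal (K := colSpace A₁) (colE X j)
  have := congrFun (congrArg (WithLp.equiv 2 (Fin m → ℝ)) h) i
  exact this.symm

lemma projCols_sub {m k n : ℕ} (A₁ : Matrix (Fin m) (Fin k) ℝ)
    (X Y : Matrix (Fin m) (Fin n) ℝ) :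
    projCols A₁ (X - Y) = projCols A₁ X - projCols A₁ Y := by
  ext i j
  have : colE (X - Y) j = colE X j - colE Y j := rfl
  show (Submodule.orthogonalProjection (colSpace A₁) (colE (X - Y) j) : EuclideanSpace ℝ (Fin m)) i
    = (Submodule.orthogonalProjection (colSpace A₁) (colE X j) : EuclideanSpace ℝ (Fin m)) i
      - (Submodule.orthogonalProjection (colSpace A₁) (colE Y j) : EuclideanSpace ℝ (Fin m)) i
  rw [this, map_sub]
  rfl

lemma projOrthCols_sub {m k n : ℕ} (A₁ : Matrix (Fin m) (Fin k) ℝ)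
    (X Y : Matrix (Fin m) (Fin n) ℝ) :
    projOrthCols A₁ (X - Y) = projOrthCols A₁ X - projOrthCols A₁ Y := by
  ext i j
  have : colE (X - Y) j = colE X j - colE Y j := rfl
  show (Submodule.orthogonalProjection (colSpace A₁)ᗮ (colE (X - Y) j) : EuclideanSpace ℝ (Fin m)) i
    = (Submodule.orthogonalProjection (colSpace A₁)ᗮ (colE X j) : EuclideanSpace ℝ (Fin m)) i
      - (Submodule.orthogonalProjection (colSpace A₁)ᗮ (colE Y j) : EuclideanSpace ℝ (Fin m)) i
  rw [this, map_sub]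
  rfl

lemma frobSq_pythagoras {m k n : ℕ} (A₁ : Matrix (Fin m) (Fin k) ℝ)
    (X : Matrix (Fin m) (Fin n) ℝ) :
    frobSq X = frobSq (projCols A₁ X) + frobSq (projOrthCols A₁ X) := by
  rw [frobSq_eq_sum_colE, frobSq_eq_sum_colE, frobSq_eq_sum_colE, ← Finset.sum_add_distrib]
  refine Finset.sum_congr rfl fun j _ => ?_
  have h := Submodule.norm_sq_eq_add_norm_sq_projection (colE X j) (colSpace A₁)
  rw [colE_projCols, colE_projOrthCols, pl_apply, pl_apply]
  simpa using h

end GHS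

namespace GHS

lemma ker_pl {m : ℕ} (S : Submodule ℝ (EuclideanSpace ℝ (Fin m))) :
    LinearMap.ker (pl Sᗮ) = S := by
  rw [pl, LinearMap.ker_comp, Submodule.ker_subtype, Submodule.comap_bot]
  show LinearMap.ker (Submodule.orthogonalProjection Sᗮ : _ →ₗ[ℝ] Sᗮ) = S
  rw [Submodule.ker_orthogonalProjectionOnto, Submodule.orthogonal_orthogonal]

lemma range_pl_le {m : ℕ} (S : Submodule ℝ (EuclideanSpace ℝ (Fin m))) :
    LinearMap.range (pl S) ≤ S := by
  rintro x ⟨v, rfl⟩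
  exact (Submodule.orthogonalProjection S v).2

lemma colSpace_projOrthCols {m k n : ℕ} (A₁ : Matrix (Fin m) (Fin k) ℝ)
    (X : Matrix (Fin m) (Fin n) ℝ) :
    colSpace (projOrthCols A₁ X) = (colSpace X).map (pl (colSpace A₁)ᗮ) := by
  rw [colSpace, toEuclideanLin_projOrthCols, LinearMap.range_comp]
  rfl

lemma colSpace_add_le {m n : ℕ} (X Y : Matrix (Fin m) (Fin n) ℝ) :
    colSpace (X + Y) ≤ colSpace X ⊔ colSpace Y := by
  rintro x ⟨v, rfl⟩
  rw [map_add, LinearMap.add_apply]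
  exact Submodule.add_mem_sup ⟨v, rfl⟩ ⟨v, rfl⟩

lemma colSpace_projCols_le {m k n : ℕ} (A₁ : Matrix (Fin m) (Fin k) ℝ)
    (X : Matrix (Fin m) (Fin n) ℝ) :
    colSpace (projCols A₁ X) ≤ colSpace A₁ := by
  rw [colSpace, toEuclideanLin_projCols]
  intro x hx
  obtain ⟨v, rfl⟩ := hx
  exact (Submodule.orthogonalProjection (colSpace A₁) _).2

/-- The key rank lower bound: `rank (A₁ | B₂) ≥ finrank S + rank (P⊥ B₂)` when `S = colSpace A₁`. -/
lemma rank_proj_le {m k l r : ℕ} (A₁ : Matrix (Fin m) (Fin k) ℝ)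
    (B₂ : Matrix (Fin m) (Fin l) ℝ)
    (hA₁ : Module.finrank ℝ (colSpace A₁) = k)
    (hr : (Matrix.fromCols A₁ B₂).rank ≤ r) :
    (projOrthCols A₁ B₂).rank ≤ r - k := by
  set S := colSpace A₁ with hS
  set U := colSp (Matrix.fromCols A₁ B₂) with hU
  have hSU : S ≤ U := by
    rw [hU, colSp_fromCols]; exact le_sup_left
  have hBU : colSpace B₂ ≤ U := by
    rw [hU, colSp_fromCols]; exact le_sup_right
  set f : _ →ₗ[ℝ] EuclideanSpace ℝ (Fin m) := pl Sᗮ ∘ₗ U.subtype with hf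
  have hrnk : Module.finrank ℝ (LinearMap.range f) + Module.finrank ℝ (LinearMap.ker f)
      = Module.finrank ℝ U := LinearMap.finrank_range_add_finrank_ker f
  have hker : Module.finrank ℝ (LinearMap.ker f) = k := by
    rw [hf, LinearMap.ker_comp, ker_pl]
    rw [← hA₁]
    exact LinearEquiv.finrank_eq (Submodule.comapSubtypeEquivOfLe hSU)
  have hUr : Module.finrank ℝ U ≤ r := by
    rw [← rank_eq_finrank_colSp]; exact hr
  have hrange : Module.finrank ℝ (LinearMap.range f) ≤ r - k := by
    omega
  refine le_trans ?_ hrange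
  rw [rank_eq_finrank_colSp, ← colSpace_eq_colSp]
  have : colSpace (projOrthCols A₁ B₂) ≤ LinearMap.range f := by
    rw [colSpace_projOrthCols, hf, LinearMap.range_comp, Submodule.range_subtype]
    exact Submodule.map_mono hBU
  exact Submodule.finrank_mono this

end GHS

open GHS
/-- SVD-free form of the Golub–Hoffman–Stewart theorem: if `M` is any best
rank-`(r−k)` Frobenius approximation of `P⊥_{A₁}(A₂)`, then
`B̃₂ := P_{A₁}(A₂) + M` is feasible and optimal for the constrained problem
`min ‖A₂ − B₂‖_F` over `rank (A₁ B₂) ≤ r`. -/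
theorem ghs_svd_free
    (m k l r : ℕ) (hkr : k ≤ r)
    (A₁ : Matrix (Fin m) (Fin k) ℝ) (A₂ : Matrix (Fin m) (Fin l) ℝ)
    (hA₁ : A₁.rank = k)
    (M : Matrix (Fin m) (Fin l) ℝ)
    (hMrank : M.rank ≤ r - k)
    (hMbest : ∀ N : Matrix (Fin m) (Fin l) ℝ, N.rank ≤ r - k →
      frobNorm (projOrthCols A₁ A₂ - M) ≤ frobNorm (projOrthCols A₁ A₂ - N))
    (B₂tilde : Matrix (Fin m) (Fin l) ℝ)
    (hB₂tilde : B₂tilde = projCols A₁ A₂ + M) :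
    (Matrix.fromCols A₁ B₂tilde).rank ≤ r ∧
    ∀ B₂ : Matrix (Fin m) (Fin l) ℝ, (Matrix.fromCols A₁ B₂).rank ≤ r →
      frobNorm (A₂ - B₂tilde) ≤ frobNorm (A₂ - B₂) := by
  have hA₁' : Module.finrank ℝ (colSpace A₁) = k := by
    rw [rank_eq_finrank_colSp] at hA₁; exact hA₁
  constructor
  · -- feasibility
    rw [rank_eq_finrank_colSp, colSp_fromCols]
    have h1 : colSpace B₂tilde ≤ colSpace A₁ ⊔ colSpace M := by
      rw [hB₂tilde]
      exact (colSpace_add_le _ _).trans (sup_le_sup_right (colSpace_projCols_le _ _) _)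
    have h2 : colSpace A₁ ⊔ colSpace B₂tilde ≤ colSpace A₁ ⊔ colSpace M :=
      sup_le le_sup_left h1
    calc Module.finrank ℝ (colSpace A₁ ⊔ colSpace B₂tilde : Submodule ℝ _)
        ≤ Module.finrank ℝ (colSpace A₁ ⊔ colSpace M : Submodule ℝ _) :=
          Submodule.finrank_mono h2
      _ ≤ Module.finrank ℝ (colSpace A₁) + Module.finrank ℝ (colSpace M) :=
          Submodule.finrank_add_le_finrank_add_finrank _ _
      _ ≤ k + (r - k) := by
          rw [hA₁']
          refine Nat.add_le_add_left ?_ _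
          rw [rank_eq_finrank_colSp] at hMrank; exact hMrank
      _ ≤ r := by omega
  · -- optimality
    intro B₂ hB₂
    have hN : (projOrthCols A₁ B₂).rank ≤ r - k := rank_proj_le A₁ B₂ hA₁' hB₂
    have hbest := hMbest _ hN
    have key1 : A₂ - B₂tilde = projOrthCols A₁ A₂ - M := by
      rw [hB₂tilde]
      nth_rewrite 1 [matrix_decomp A₁ A₂]
      abel
    rw [key1, frobNorm_le_iff]
    rw [frobNorm_le_iff] at hbest
    have key2 : projOrthCols A₁ A₂ - projOrthCols A₁ B₂ = projOrthCols A₁ (A₂ - B₂) :=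
      (projOrthCols_sub A₁ A₂ B₂).symm
    rw [key2] at hbest
    have hpyth := frobSq_pythagoras A₁ (A₂ - B₂)
    have hnn := frobSq_nonneg (projCols A₁ (A₂ - B₂))
    linarith
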